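/- Let G ⊂ SL(3,ℝ) be the subgroup of upper-triangular matrices g = [[x,t,v],[0,y,u],[0,0,z]] with xyz = 1, acting on 2×3 (or similar) data by the adjoint action induced on L(g̅/g ∧ g̅/g, g̅) where g̅ = sl(3,ℝ) and g its upper-triangular subalgebra. The subspace W of maps φ with φ(e₂₁∧e₃₁) = [[0,a,b],[0,0,0],[0,0,0]], φ(e₃₁∧e₃₂) = [[0,0,c],[0,0,d],[0,0,0]], φ(e₂₁∧e₃₂) = 0 (for a,b,c,d ∈ ℝ) is invariant under this G-action; explicitly, g·φ sends e₂₁∧e₃₁ to (x³/(y²z²))[[0, az, −au+by],[0,0,0],[0,0,0]] and e₃₁∧e₃₂ to (xy/z³)[[0,0,cx+dt],[0,0,dy],[0,0,0]]. -/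

import Mathlib

open Matrix

/-- Elementary matrix E_ij (3×3, real). -/
noncomputable def Emat (i j : Fin 3) : Matrix (Fin 3) (Fin 3) ℝ :=
  Matrix.single i j 1

/-- The coordinates of `X + g` in the basis `e₂₁, e₃₁, e₃₂` of `sl(3,ℝ)/g`
(g the upper-triangular subalgebra): the below-diagonal entries of `X`. -/
noncomputable def lowCoords (X : Matrix (Fin 3) (Fin 3) ℝ) : ℝ × ℝ × ℝ :=
  (X 1 0, X 2 0, X 2 1)

/-- The element of `W ⊂ L(g̅/g ∧ g̅/g, g̅)` with parameters `(a,b,c,d)`,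
evaluated on a pair of cosets given in the coordinates `(e₂₁, e₃₁, e₃₂)`:
`e₂₁∧e₃₁ ↦ [[0,a,b],[0,0,0],[0,0,0]]`, `e₃₁∧e₃₂ ↦ [[0,0,c],[0,0,d],[0,0,0]]`,
`e₂₁∧e₃₂ ↦ 0`, extended bilinearly and alternatingly. -/
noncomputable def phiW (a b c d : ℝ) (p q : ℝ × ℝ × ℝ) :
    Matrix (Fin 3) (Fin 3) ℝ :=
  (p.1 * q.2.1 - p.2.1 * q.1) • !![0, a, b; 0, 0, 0; 0, 0, 0] +
  (p.2.1 * q.2.2 - p.2.2 * q.2.1) • !![0, 0, c; 0, 0, d; 0, 0, 0]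


lemma conj_eq (x t v y u z a b c d : ℝ) (p q : ℝ × ℝ × ℝ) :
    !![x, t, v; 0, y, u; 0, 0, z] * phiW a b c d p q *
      !![y * z, -(t * z), t * u - y * v; 0, x * z, -(x * u); 0, 0, x * y] =
    !![0, x^2*z*((p.1*q.2.1 - p.2.1*q.1)*a),
        -(x^2*u)*((p.1*q.2.1 - p.2.1*q.1)*a)
          + x^2*y*((p.1*q.2.1 - p.2.1*q.1)*b + (p.2.1*q.2.2 - p.2.2*q.2.1)*c)
          + x*y*t*((p.2.1*q.2.2 - p.2.2*q.2.1)*d);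
       0, 0, x*y^2*((p.2.1*q.2.2 - p.2.2*q.2.1)*d);
       0, 0, 0] := by
  ext i j
  fin_cases i <;> fin_cases j <;>
    simp [phiW, Matrix.mul_apply, Fin.sum_univ_succ, Matrix.vecHead,
      Matrix.vecTail] <;> ring

lemma low_eq (x t v y u z : ℝ) (X : Matrix (Fin 3) (Fin 3) ℝ) :
    lowCoords (!![y * z, -(t * z), t * u - y * v; 0, x * z, -(x * u); 0, 0, x * y]
        * X * !![x, t, v; 0, y, u; 0, 0, z]) =
      (x^2*(z * X 1 0 - u * X 2 0), x^2*y*(X 2 0), x*y*(t * X 2 0 + y * X 2 1)) := by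
  simp only [lowCoords, Prod.ext_iff, Matrix.mul_apply, Fin.sum_univ_succ,
    Fin.sum_univ_zero]
  simp [Matrix.vecHead, Matrix.vecTail]
  refine ⟨by ring, by ring, by ring⟩

set_option maxHeartbeats 1000000 in
/-- For `g = [[x,t,v],[0,y,u],[0,0,z]] ∈ G ⊂ SL(3,ℝ)` (xyz = 1),
the induced action `(g·φ)(X∧Y) = Ad(g) φ(Ad(g⁻¹)X ∧ Ad(g⁻¹)Y)` on
`L(g̅/g ∧ g̅/g, g̅)` leaves the subspace `W` invariant; explicitly, for
`φ = φ_{a,b,c,d} ∈ W`, `g·φ` sends `e₂₁∧e₃₁` to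
`(x³/(y²z²))·[[0, az, −au+by],0,0]`, `e₃₁∧e₃₂` to
`(xy/z³)·[[0,0,cx+dt],[0,0,dy],0]`, and `e₂₁∧e₃₂` to `0`. -/
theorem stmt6 (x t v y u z a b c d : ℝ) (hdet : x * y * z = 1) :
    let g : Matrix (Fin 3) (Fin 3) ℝ := !![x, t, v; 0, y, u; 0, 0, z]
    let ginv : Matrix (Fin 3) (Fin 3) ℝ :=
      !![y * z, -(t * z), t * u - y * v; 0, x * z, -(x * u); 0, 0, x * y]
    let act : Matrix (Fin 3) (Fin 3) ℝ → Matrix (Fin 3) (Fin 3) ℝ →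
        Matrix (Fin 3) (Fin 3) ℝ := fun X Y =>
      g * phiW a b c d (lowCoords (ginv * X * g)) (lowCoords (ginv * Y * g)) * ginv
    act (Emat 1 0) (Emat 2 0)
        = (x ^ 3 / (y ^ 2 * z ^ 2)) • !![0, a * z, -(a * u) + b * y; 0, 0, 0; 0, 0, 0] ∧
    act (Emat 2 0) (Emat 2 1)
        = (x * y / z ^ 3) • !![0, 0, c * x + d * t; 0, 0, d * y; 0, 0, 0] ∧
    act (Emat 1 0) (Emat 2 1) = 0 ∧
    ∃ a' b' c' d' : ℝ, ∀ X Y : Matrix (Fin 3) (Fin 3) ℝ,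
      act X Y = phiW a' b' c' d' (lowCoords X) (lowCoords Y) := by
  have hy : y ≠ 0 := by intro h; rw [h] at hdet; simp at hdet
  have hz : z ≠ 0 := by intro h; rw [h] at hdet; simp at hdet
  have hx' : x = (y * z)⁻¹ := by field_simp; linear_combination hdet
  intro g ginv act
  have hact : ∀ X Y, act X Y =
      !![0, x^2*z*(((lowCoords (ginv * X * g)).1*(lowCoords (ginv * Y * g)).2.1
            - (lowCoords (ginv * X * g)).2.1*(lowCoords (ginv * Y * g)).1)*a),
          -(x^2*u)*(((lowCoords (ginv * X * g)).1*(lowCoords (ginv * Y * g)).2.1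
            - (lowCoords (ginv * X * g)).2.1*(lowCoords (ginv * Y * g)).1)*a)
            + x^2*y*(((lowCoords (ginv * X * g)).1*(lowCoords (ginv * Y * g)).2.1
            - (lowCoords (ginv * X * g)).2.1*(lowCoords (ginv * Y * g)).1)*b
            + ((lowCoords (ginv * X * g)).2.1*(lowCoords (ginv * Y * g)).2.2
            - (lowCoords (ginv * X * g)).2.2*(lowCoords (ginv * Y * g)).2.1)*c)
            + x*y*t*(((lowCoords (ginv * X * g)).2.1*(lowCoords (ginv * Y * g)).2.2
            - (lowCoords (ginv * X * g)).2.2*(lowCoords (ginv * Y * g)).2.1)*d);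
         0, 0, x*y^2*(((lowCoords (ginv * X * g)).2.1*(lowCoords (ginv * Y * g)).2.2
            - (lowCoords (ginv * X * g)).2.2*(lowCoords (ginv * Y * g)).2.1)*d);
         0, 0, 0] := fun X Y => conj_eq x t v y u z a b c d _ _
  have hlow : ∀ X, lowCoords (ginv * X * g) =
      (x^2*(z * X 1 0 - u * X 2 0), x^2*y*(X 2 0), x*y*(t * X 2 0 + y * X 2 1)) :=
    fun X => low_eq x t v y u z X
  have hE : ∀ i j k l : Fin 3, Emat i j k l = if i = k ∧ j = l then 1 else 0 := by
    intro i j k l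
    simp [Emat, Matrix.single]
  refine ⟨?_, ?_, ?_, ?_⟩
  · rw [hact, hlow, hlow]
    clear hact hlow act ginv g
    subst hx'
    ext i j
    fin_cases i <;> fin_cases j <;>
      simp [hE, Matrix.vecHead, Matrix.vecTail] <;> field_simp <;> ring
  · rw [hact, hlow, hlow]
    clear hact hlow act ginv g
    subst hx'
    ext i j
    fin_cases i <;> fin_cases j <;>
      simp [hE, Matrix.vecHead, Matrix.vecTail] <;> field_simp <;> ring
  · rw [hact, hlow, hlow]
    clear hact hlow act ginv g
    ext i j
    fin_cases i <;> fin_cases j <;>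
      simp [hE, Matrix.vecHead, Matrix.vecTail]
  · refine ⟨x^6*y*z^2*a, x^6*y*z*(-(u*a)+y*b), x^4*y^4*(x*c+t*d), x^4*y^5*d,
      fun X Y => ?_⟩
    rw [hact, hlow, hlow]
    clear hact hlow act ginv g
    ext i j
    fin_cases i <;> fin_cases j <;>
      simp [phiW, lowCoords, Matrix.vecHead, Matrix.vecTail] <;> ring
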